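/- Let a, b, c be real numbers with c ≠ 0. For all 3×3 matrices P, Q whose entries are real polynomials, the functions x ↦ (P·D₂)(x)·W(x)·Q(x)ᵀ and x ↦ P(x)·W(x)·((Q·D₂)(x))ᵀ are (entrywise) integrable on ℝ and have equal integrals; that is, D₂ is W-symmetric: ⟨P·D₂, Q⟩_W = ⟨P, Q·D₂⟩_W. -/

import Mathlib

open Matrix Polynomial MeasureTheory

/-- The 3×3 Hermite-type weight matrix. -/
noncomputable def W (a b c : ℝ) (x : ℝ) : Matrix (Fin 3) (Fin 3) ℝ :=
  Real.exp (-x ^ 2) •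
    !![Real.exp (2 * b * x) + a ^ 2 * x ^ 2, a * x, a * c * x ^ 2;
       a * x, 1, c * x;
       a * c * x ^ 2, c * x, c ^ 2 * x ^ 2 + 1]

/-- Second-order (polynomial) coefficient of the operator D₂. -/
noncomputable def G2p (a c : ℝ) : Matrix (Fin 3) (Fin 3) (Polynomial ℝ) :=
  !![0, C a * X, 0; 0, 1, 0; 0, C c * X, 0]

/-- First-order (polynomial) coefficient of the operator D₂. -/
noncomputable def G1p (a c : ℝ) : Matrix (Fin 3) (Fin 3) (Polynomial ℝ) :=
  !![0, C (2 * a), C (-2 * a / c) * X;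
     0, 0, C (-2 / c);
     0, C (2 * c + 2 / c), -2 * X]

/-- Zeroth-order coefficient of the operator D₂. -/
noncomputable def G0p (a c : ℝ) : Matrix (Fin 3) (Fin 3) (Polynomial ℝ) :=
  !![C (2 + 4 / c ^ 2), 0, C (-2 * a / c);
     0, C (2 + 4 / c ^ 2), 0;
     0, 0, 0]

/-- The right action of the operator D₂ on a matrix polynomial:
P·D₂ = P''·G₂ + P'·G₁ + P·G₀. -/
noncomputable def rightD2 (a c : ℝ) (P : Matrix (Fin 3) (Fin 3) (Polynomial ℝ)) :
    Matrix (Fin 3) (Fin 3) (Polynomial ℝ) :=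
  P.map (fun p => derivative (derivative p)) * G2p a c
    + P.map (fun p => derivative p) * G1p a c + P * G0p a c

/-- Entrywise evaluation of a matrix polynomial. -/
noncomputable def evalM (P : Matrix (Fin 3) (Fin 3) (Polynomial ℝ)) (x : ℝ) :
    Matrix (Fin 3) (Fin 3) ℝ :=
  P.map (Polynomial.eval x)

/-! ### Auxiliary definitions -/

abbrev MatP := Matrix (Fin 3) (Fin 3) (Polynomial ℝ)

/-- Polynomial part of the weight matrix (the weight is
`e^{-x²}·(Wq + e^{2bx}·Ep)`). -/
noncomputable def Wq (a c : ℝ) : MatP :=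
  !![C (a ^ 2) * X ^ 2, C a * X, C (a * c) * X ^ 2;
     C a * X, 1, C c * X;
     C (a * c) * X ^ 2, C c * X, C (c ^ 2) * X ^ 2 + 1]

/-- Exponential part carrier of the weight matrix. -/
noncomputable def Ep : MatP :=
  !![1, 0, 0; 0, 0, 0; 0, 0, 0]

/-- The "potential" matrix polynomial whose (weighted) derivative is the difference of the
two bilinear integrands. -/
noncomputable def Umat (a c : ℝ) (P Q : MatP) : MatP :=
  P.map (fun p => derivative p) * (G2p a c * Wq a c) * Qᵀ
    - P * (G2p a c * Wq a c) * (Q.map (fun p => derivative p))ᵀ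
    - P * ((G2p a c * Wq a c).map (fun p => derivative p)
        - ((2 : Polynomial ℝ) * X) • (G2p a c * Wq a c)) * Qᵀ
    + P * (G1p a c * Wq a c) * Qᵀ

/-! ### Integrability lemmas -/

lemma int_pow_gauss (n : ℕ) : Integrable (fun x : ℝ => x ^ n * Real.exp (-x ^ 2)) := by
  have h := integrable_rpow_mul_exp_neg_mul_sq (b := 1) one_pos
      (s := (n : ℝ)) (by exact_mod_cast neg_one_lt_zero.trans_le n.cast_nonneg)
  simpa [Real.rpow_natCast, neg_mul, one_mul] using h

lemma int_poly_gauss (p : Polynomial ℝ) :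
    Integrable (fun x : ℝ => Real.exp (-x ^ 2) * eval x p) := by
  induction p using Polynomial.induction_on' with
  | add p q hp hq => simpa [mul_add] using hp.fun_add hq
  | monomial n r =>
      have h := (int_pow_gauss n).const_mul r
      apply h.congr
      filter_upwards with x
      simp [eval_monomial]
      ring

lemma int_poly_gauss2 (b : ℝ) (p : Polynomial ℝ) :
    Integrable (fun x : ℝ => Real.exp (2 * b * x - x ^ 2) * eval x p) := by
  have h := ((int_poly_gauss (p.comp (X + C b))).comp_sub_right b).const_mul
      (Real.exp (b ^ 2))
  apply h.congr
  filter_upwards with x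
  simp only [Function.comp, eval_comp, eval_add, eval_X, eval_C]
  rw [sub_add_cancel, ← mul_assoc, ← Real.exp_add]
  ring_nf

/-! ### Evaluation lemmas -/

lemma evalM_mul (M N : MatP) (x : ℝ) :
    evalM (M * N) x = evalM M x * evalM N x := by
  simp only [evalM, ← coe_evalRingHom, Matrix.map_mul]

lemma evalM_transpose (M : MatP) (x : ℝ) :
    evalM Mᵀ x = (evalM M x)ᵀ := by
  simp [evalM, Matrix.transpose_map]

set_option linter.unnecessarySeqFocus false in
lemma W_split (a b c x : ℝ) :
    W a b c x = Real.exp (-x ^ 2) • evalM (Wq a c) x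
      + Real.exp (2 * b * x - x ^ 2) • evalM Ep x := by
  ext i j
  fin_cases i <;> fin_cases j <;>
    simp [W, Wq, Ep, evalM, Matrix.vecHead, Matrix.vecTail, ← Real.exp_add] <;>
    ring_nf <;> rw [← Real.exp_add] <;> ring_nf

lemma entry_form (a b c x : ℝ) (M N : MatP) (i j : Fin 3) :
    (evalM M x * W a b c x * (evalM N x)ᵀ) i j
      = Real.exp (-x ^ 2) * eval x ((M * Wq a c * Nᵀ) i j)
        + Real.exp (2 * b * x - x ^ 2) * eval x ((M * Ep * Nᵀ) i j) := by
  have h1 : ∀ K : MatP,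
      eval x ((M * K * Nᵀ) i j) = (evalM M x * evalM K x * (evalM N x)ᵀ) i j := by
    intro K
    rw [← evalM_transpose, ← evalM_mul, ← evalM_mul]
    rfl
  rw [h1, h1, W_split]
  simp [Matrix.mul_add, Matrix.add_mul, Matrix.mul_smul, Matrix.smul_mul,
    Matrix.add_apply, Matrix.smul_apply, smul_eq_mul]

/-! ### Structure constants: products with `Ep` -/

lemma hG2E (a c : ℝ) : G2p a c * Ep = 0 := by
  refine Matrix.ext fun i j => ?_
  fin_cases i <;> fin_cases j <;>
    simp [G2p, Ep, Matrix.mul_apply, Fin.sum_univ_three, Matrix.vecHead, Matrix.vecTail]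

lemma hG1E (a c : ℝ) : G1p a c * Ep = 0 := by
  refine Matrix.ext fun i j => ?_
  fin_cases i <;> fin_cases j <;>
    simp [G1p, Ep, Matrix.mul_apply, Fin.sum_univ_three, Matrix.vecHead, Matrix.vecTail]

lemma hEG2 (a c : ℝ) : Ep * (G2p a c)ᵀ = 0 := by
  refine Matrix.ext fun i j => ?_
  fin_cases i <;> fin_cases j <;>
    simp [G2p, Ep, Matrix.mul_apply, Fin.sum_univ_three, Matrix.vecHead, Matrix.vecTail]

lemma hEG1 (a c : ℝ) : Ep * (G1p a c)ᵀ = 0 := by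
  refine Matrix.ext fun i j => ?_
  fin_cases i <;> fin_cases j <;>
    simp [G1p, Ep, Matrix.mul_apply, Fin.sum_univ_three, Matrix.vecHead, Matrix.vecTail]

lemma hG0E (a c : ℝ) : G0p a c * Ep = Ep * (G0p a c)ᵀ := by
  refine Matrix.ext fun i j => ?_
  fin_cases i <;> fin_cases j <;>
    simp [G0p, Ep, Matrix.mul_apply, Fin.sum_univ_three, Matrix.vecHead, Matrix.vecTail]

/-- The exponential part of the difference of integrands vanishes identically. -/
lemma K1 (a c : ℝ) (P Q : MatP) :
    rightD2 a c P * Ep * Qᵀ = P * Ep * (rightD2 a c Q)ᵀ := by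
  have h2' : ∀ M : MatP, G2p a c * (Ep * M) = 0 := by
    intro M; rw [← Matrix.mul_assoc, hG2E, Matrix.zero_mul]
  have h1' : ∀ M : MatP, G1p a c * (Ep * M) = 0 := by
    intro M; rw [← Matrix.mul_assoc, hG1E, Matrix.zero_mul]
  have hE2' : ∀ M : MatP, Ep * ((G2p a c)ᵀ * M) = 0 := by
    intro M; rw [← Matrix.mul_assoc, hEG2, Matrix.zero_mul]
  have hE1' : ∀ M : MatP, Ep * ((G1p a c)ᵀ * M) = 0 := by
    intro M; rw [← Matrix.mul_assoc, hEG1, Matrix.zero_mul]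
  have h0' : ∀ M : MatP, G0p a c * (Ep * M) = Ep * ((G0p a c)ᵀ * M) := by
    intro M; rw [← Matrix.mul_assoc, hG0E, Matrix.mul_assoc]
  rw [rightD2, rightD2]
  simp only [Matrix.transpose_add, Matrix.transpose_mul, Matrix.add_mul, Matrix.mul_add,
    Matrix.mul_assoc, h2', h1', hE2', hE1', h0', Matrix.mul_zero, zero_add, add_zero]

/-! ### Symmetry equations for the polynomial part -/

set_option maxHeartbeats 1000000 in
lemma S1 (a c : ℝ) : G2p a c * Wq a c = Wq a c * (G2p a c)ᵀ := by
  refine Matrix.ext fun i j => ?_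
  fin_cases i <;> fin_cases j <;>
  · refine Polynomial.funext fun r => ?_
    simp [G2p, Wq, Matrix.mul_apply, Fin.sum_univ_three, Matrix.vecHead, Matrix.vecTail]
    try ring

set_option maxHeartbeats 1000000 in
lemma S2 (a c : ℝ) (hc : c ≠ 0) :
    Wq a c * (G1p a c)ᵀ
      = (2 : Polynomial ℝ) • (G2p a c * Wq a c).map (fun p => derivative p)
        - ((4 : Polynomial ℝ) * X) • (G2p a c * Wq a c) - G1p a c * Wq a c := by
  refine Matrix.ext fun i j => ?_
  fin_cases i <;> fin_cases j <;>
  · refine Polynomial.funext fun r => ?_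
    simp [G2p, G1p, Wq, Matrix.mul_apply, Fin.sum_univ_three, Matrix.vecHead,
      Matrix.vecTail, derivative_mul, derivative_X_pow, derivative_pow, derivative_C,
      derivative_add, derivative_sub, derivative_one, derivative_X]
    field_simp
    try ring

set_option maxHeartbeats 2000000 in
lemma S3 (a c : ℝ) (hc : c ≠ 0) :
    Wq a c * (G0p a c)ᵀ
      = (G2p a c * Wq a c).map (fun p => derivative (derivative p))
        - (2 : Polynomial ℝ) • (G2p a c * Wq a c)
        - ((4 : Polynomial ℝ) * X) • (G2p a c * Wq a c).map (fun p => derivative p)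
        + ((4 : Polynomial ℝ) * X ^ 2) • (G2p a c * Wq a c)
        - (G1p a c * Wq a c).map (fun p => derivative p)
        + ((2 : Polynomial ℝ) * X) • (G1p a c * Wq a c)
        + G0p a c * Wq a c := by
  refine Matrix.ext fun i j => ?_
  fin_cases i <;> fin_cases j <;>
  · refine Polynomial.funext fun r => ?_
    simp [G2p, G1p, G0p, Wq, Matrix.mul_apply, Fin.sum_univ_three, Matrix.vecHead,
      Matrix.vecTail, derivative_mul, derivative_X_pow, derivative_pow, derivative_C,
      derivative_add, derivative_sub, derivative_one, derivative_X]
    field_simp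
    try ring

/-! ### The generic algebraic identity -/

set_option maxHeartbeats 1000000 in
lemma generic_identity (P Q A B C0 : MatP) :
    (P.map (fun p => derivative (derivative p)) * A + P.map (fun p => derivative p) * B
        + P * C0) * Qᵀ
      - P * (A * (Q.map (fun p => derivative (derivative p)))ᵀ
          + ((2 : Polynomial ℝ) • A.map (fun p => derivative p)
              - ((4 : Polynomial ℝ) * X) • A - B) * (Q.map (fun p => derivative p))ᵀ
          + (A.map (fun p => derivative (derivative p)) - (2 : Polynomial ℝ) • A
              - ((4 : Polynomial ℝ) * X) • A.map (fun p => derivative p)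
              + ((4 : Polynomial ℝ) * X ^ 2) • A
              - B.map (fun p => derivative p) + ((2 : Polynomial ℝ) * X) • B + C0) * Qᵀ)
    = (P.map (fun p => derivative p) * A * Qᵀ - P * A * (Q.map (fun p => derivative p))ᵀ
        - P * (A.map (fun p => derivative p) - ((2 : Polynomial ℝ) * X) • A) * Qᵀ
        + P * B * Qᵀ).map (fun p => derivative p)
      - ((2 : Polynomial ℝ) * X) •
        (P.map (fun p => derivative p) * A * Qᵀ - P * A * (Q.map (fun p => derivative p))ᵀ
          - P * (A.map (fun p => derivative p) - ((2 : Polynomial ℝ) * X) • A) * Qᵀ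
          + P * B * Qᵀ) := by
  refine Matrix.ext fun i j => ?_
  simp only [Matrix.mul_apply, Matrix.add_apply, Matrix.sub_apply, Matrix.smul_apply,
    Matrix.map_apply, Matrix.transpose_apply, Fin.sum_univ_three, smul_eq_mul,
    derivative_add, derivative_sub, derivative_mul, derivative_X, derivative_ofNat,
    derivative_X_pow, map_ofNat, Nat.cast_ofNat, pow_one, derivative_one]
  ring

set_option maxHeartbeats 1000000 in
/-- The polynomial part of the difference of integrands is the weighted derivative of
`Umat`. -/
lemma K2 (a c : ℝ) (hc : c ≠ 0) (P Q : MatP) :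
    rightD2 a c P * Wq a c * Qᵀ - P * Wq a c * (rightD2 a c Q)ᵀ
      = (Umat a c P Q).map (fun p => derivative p)
        - ((2 : Polynomial ℝ) * X) • Umat a c P Q := by
  have hg := generic_identity P Q (G2p a c * Wq a c) (G1p a c * Wq a c) (G0p a c * Wq a c)
  have e2 : ∀ M : MatP, Wq a c * ((G2p a c)ᵀ * M) = G2p a c * Wq a c * M := by
    intro M; rw [← Matrix.mul_assoc, ← S1]
  have e1 : ∀ M : MatP, Wq a c * ((G1p a c)ᵀ * M)
      = ((2 : Polynomial ℝ) • (G2p a c * Wq a c).map (fun p => derivative p)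
          - ((4 : Polynomial ℝ) * X) • (G2p a c * Wq a c) - G1p a c * Wq a c) * M := by
    intro M; rw [← Matrix.mul_assoc, S2 a c hc]
  have e0 : ∀ M : MatP, Wq a c * ((G0p a c)ᵀ * M)
      = ((G2p a c * Wq a c).map (fun p => derivative (derivative p))
          - (2 : Polynomial ℝ) • (G2p a c * Wq a c)
          - ((4 : Polynomial ℝ) * X) • (G2p a c * Wq a c).map (fun p => derivative p)
          + ((4 : Polynomial ℝ) * X ^ 2) • (G2p a c * Wq a c)
          - (G1p a c * Wq a c).map (fun p => derivative p)
          + ((2 : Polynomial ℝ) * X) • (G1p a c * Wq a c)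
          + G0p a c * Wq a c) * M := by
    intro M; rw [← Matrix.mul_assoc, S3 a c hc]
  rw [Umat, ← hg, rightD2, rightD2]
  simp only [Matrix.transpose_add, Matrix.transpose_mul, Matrix.add_mul, Matrix.mul_add,
    Matrix.mul_assoc, e2, e1, e0]

/-! ### Derivative of the Gaussian-weighted polynomial -/

lemma hasDeriv_gauss (u : Polynomial ℝ) (x : ℝ) :
    HasDerivAt (fun x : ℝ => Real.exp (-x ^ 2) * eval x u)
      (Real.exp (-x ^ 2) * eval x (derivative u - 2 * X * u)) x := by
  have h1 : HasDerivAt (fun x : ℝ => -x ^ 2) (-(2 * x)) x := by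
    simpa using (hasDerivAt_pow 2 x).fun_neg
  have h2 := (h1.exp).fun_mul (u.hasDerivAt x)
  refine h2.congr_deriv ?_
  simp only [eval_sub, eval_mul, eval_X, eval_ofNat]
  ring

/-! ### Main theorem -/

/-- the operator D₂ is W-symmetric: for all matrix polynomials P, Q the
functions (P·D₂)(x)·W(x)·Q(x)ᵀ and P(x)·W(x)·((Q·D₂)(x))ᵀ are entrywise integrable
on ℝ and ⟨P·D₂, Q⟩_W = ⟨P, Q·D₂⟩_W. -/
theorem D2_W_symmetric (a b c : ℝ) (hc : c ≠ 0)
    (P Q : Matrix (Fin 3) (Fin 3) (Polynomial ℝ)) :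
    (∀ i j, Integrable
        (fun x => (evalM (rightD2 a c P) x * W a b c x * (evalM Q x)ᵀ) i j)) ∧
    (∀ i j, Integrable
        (fun x => (evalM P x * W a b c x * (evalM (rightD2 a c Q) x)ᵀ) i j)) ∧
    (∀ i j, (∫ x, (evalM (rightD2 a c P) x * W a b c x * (evalM Q x)ᵀ) i j)
        = ∫ x, (evalM P x * W a b c x * (evalM (rightD2 a c Q) x)ᵀ) i j) := by
  have hf : ∀ i j, Integrable
      (fun x => (evalM (rightD2 a c P) x * W a b c x * (evalM Q x)ᵀ) i j) := by
    intro i j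
    have he : (fun x => (evalM (rightD2 a c P) x * W a b c x * (evalM Q x)ᵀ) i j)
        = fun x => Real.exp (-x ^ 2) * eval x ((rightD2 a c P * Wq a c * Qᵀ) i j)
          + Real.exp (2 * b * x - x ^ 2) * eval x ((rightD2 a c P * Ep * Qᵀ) i j) :=
      funext fun x => entry_form a b c x _ _ i j
    rw [he]
    exact (int_poly_gauss _).add (int_poly_gauss2 b _)
  have hg : ∀ i j, Integrable
      (fun x => (evalM P x * W a b c x * (evalM (rightD2 a c Q) x)ᵀ) i j) := by
    intro i j
    have he : (fun x => (evalM P x * W a b c x * (evalM (rightD2 a c Q) x)ᵀ) i j)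
        = fun x => Real.exp (-x ^ 2) * eval x ((P * Wq a c * (rightD2 a c Q)ᵀ) i j)
          + Real.exp (2 * b * x - x ^ 2) * eval x ((P * Ep * (rightD2 a c Q)ᵀ) i j) :=
      funext fun x => entry_form a b c x _ _ i j
    rw [he]
    exact (int_poly_gauss _).add (int_poly_gauss2 b _)
  refine ⟨hf, hg, fun i j => ?_⟩
  set u : Polynomial ℝ := Umat a c P Q i j with hu
  have hpt : ∀ x, (evalM (rightD2 a c P) x * W a b c x * (evalM Q x)ᵀ) i j
      - (evalM P x * W a b c x * (evalM (rightD2 a c Q) x)ᵀ) i j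
      = Real.exp (-x ^ 2) * eval x (derivative u - 2 * X * u) := by
    intro x
    rw [entry_form a b c x _ _ i j, entry_form a b c x _ _ i j]
    have hK1 := congrArg (fun M : MatP => eval x (M i j)) (K1 a c P Q)
    have hK2 := congrArg (fun M : MatP => eval x (M i j)) (K2 a c hc P Q)
    simp only [Matrix.sub_apply, Matrix.smul_apply, Matrix.map_apply, smul_eq_mul,
      eval_sub, eval_mul] at hK1 hK2
    simp only [eval_sub, eval_mul, ← hu]
    linear_combination Real.exp (-x ^ 2) * hK2 + Real.exp (2 * b * x - x ^ 2) * hK1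
  have hder : ∀ x, HasDerivAt (fun x : ℝ => Real.exp (-x ^ 2) * eval x u)
      ((fun x => (evalM (rightD2 a c P) x * W a b c x * (evalM Q x)ᵀ) i j
        - (evalM P x * W a b c x * (evalM (rightD2 a c Q) x)ᵀ) i j) x) x := by
    intro x
    have h2 := hasDeriv_gauss u x
    rw [← hpt x] at h2
    exact h2
  have h0 := integral_eq_zero_of_hasDerivAt_of_integrable hder
      ((hf i j).sub (hg i j)) (int_poly_gauss u)
  rw [integral_sub (hf i j) (hg i j)] at h0
  linarith
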